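/- Let N be a finitely generated nilpotent group and ψ : N → N an endomorphism. Then ψ is an automorphism if and only if the induced endomorphism ψ_* of the abelianization N^{ab} = N/[N,N] is an automorphism. -/

import Mathlib

open Subgroup Function
open scoped commutatorElement

section Helpers

variable {G : Type*} [Group G]

/-- commutator with a central factor on the left. -/
private lemma comm_central_left {z : G} (hz : z ∈ Subgroup.center G) (a b : G) :
    ⁅a * z, b⁆ = ⁅a, b⁆ := by
  have h := Subgroup.mem_center_iff.mp hz
  simp only [commutatorElement_def, mul_inv_rev]
  calc a * z * b * (z⁻¹ * a⁻¹) * b⁻¹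
      = a * (z * b * z⁻¹) * a⁻¹ * b⁻¹ := by group
    _ = a * b * a⁻¹ * b⁻¹ := by rw [← h b]; group

private lemma comm_central_right {z : G} (hz : z ∈ Subgroup.center G) (a b : G) :
    ⁅a, b * z⁆ = ⁅a, b⁆ := by
  have h := Subgroup.mem_center_iff.mp hz
  simp only [commutatorElement_def, mul_inv_rev]
  calc a * (b * z) * a⁻¹ * (z⁻¹ * b⁻¹)
      = a * b * (z * a⁻¹ * z⁻¹) * b⁻¹ := by group
    _ = a * b * a⁻¹ * b⁻¹ := by rw [← h a⁻¹]; group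

/-- Lower central series maps onto lower central series under a surjective hom. -/
private lemma lcs_map_surjective {H : Type*} [Group H] (f : G →* H) (hf : Surjective f) :
    ∀ n, (Subgroup.lowerCentralSeries (⊤ : Subgroup G) n).map f = Subgroup.lowerCentralSeries (⊤ : Subgroup H) n := by
  intro n
  induction n with
  | zero =>
      simpa using Subgroup.map_top_of_surjective f hf
  | succ n ih =>
      have h1 : Subgroup.lowerCentralSeries (⊤ : Subgroup G) (n+1) = ⁅Subgroup.lowerCentralSeries (⊤ : Subgroup G) n, (⊤ : Subgroup G)⁆ := rfl
      have h2 : Subgroup.lowerCentralSeries (⊤ : Subgroup H) (n+1) = ⁅Subgroup.lowerCentralSeries (⊤ : Subgroup H) n, (⊤ : Subgroup H)⁆ := rfl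
      rw [h1, h2, Subgroup.map_commutator, ih, Subgroup.map_top_of_surjective f hf]

/-- A subgroup whose commutator with everything is trivial is central. -/
private lemma le_center_of_commutator_eq_bot {K : Subgroup G}
    (h : ⁅K, (⊤ : Subgroup G)⁆ = ⊥) : K ≤ Subgroup.center G := by
  intro k hk
  rw [Subgroup.mem_center_iff]
  intro g
  have : ⁅k, g⁆ ∈ (⊥ : Subgroup G) := h ▸ commutator_mem_commutator hk (mem_top g)
  rw [Subgroup.mem_bot] at this
  exact (commutatorElement_eq_one_iff_mul_comm.mp this).symm

private lemma commutator_center_top : ⁅Subgroup.center G, (⊤ : Subgroup G)⁆ = ⊥ := by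
  rw [eq_bot_iff]
  rw [Subgroup.commutator_le]
  intro z hz g _
  rw [Subgroup.mem_bot, commutatorElement_eq_one_iff_mul_comm]
  exact (Subgroup.mem_center_iff.mp hz g).symm

end Helpers

/-- In a nilpotent group, a subgroup which together with the commutator subgroup generates the
whole group must be the whole group. -/
private lemma eq_top_of_sup_commutator :
    ∀ (c : ℕ) (G : Type) [Group G] [Group.IsNilpotent G], Group.nilpotencyClass G ≤ c →
      ∀ H : Subgroup G, H ⊔ commutator G = ⊤ → H = ⊤ := by
  intro c
  induction c with
  | zero =>
      intro G _ _ hc H _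
      haveI : Subsingleton G := nilpotencyClass_zero_iff_subsingleton.mp (Nat.le_zero.mp hc)
      rw [eq_top_iff]
      intro x _
      rw [Subsingleton.elim x 1]
      exact H.one_mem
  | succ c ih =>
      intro G _ _ hc H hH
      set Z := Subgroup.center G
      set mk := QuotientGroup.mk' Z with hmk
      have hsurj : Surjective mk := QuotientGroup.mk'_surjective Z
      haveI : Group.IsNilpotent (G ⧸ Z) := nilpotent_of_surjective mk hsurj
      have hclass : Group.nilpotencyClass (G ⧸ Z) ≤ c := by
        rw [nilpotencyClass_quotient_center]
        omega
      have hcomm : commutator (G ⧸ Z) = (commutator G).map mk := by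
        rw [commutator_def, commutator_def, Subgroup.map_commutator,
          Subgroup.map_top_of_surjective mk hsurj]
      have hmap : H.map mk ⊔ commutator (G ⧸ Z) = ⊤ := by
        rw [hcomm, ← Subgroup.map_sup, hH, Subgroup.map_top_of_surjective mk hsurj]
      have htop := ih (G ⧸ Z) hclass (H.map mk) hmap
      have hHZ : H ⊔ Z = ⊤ := by
        have := congrArg (Subgroup.comap mk) htop
        rwa [Subgroup.comap_map_eq, QuotientGroup.ker_mk', Subgroup.comap_top] at this
      -- now the commutator subgroup is contained in `H`
      have hcle : commutator G ≤ H := by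
        rw [commutator_def, Subgroup.commutator_le]
        intro g₁ _ g₂ _
        have hg₁ : g₁ ∈ H ⊔ Z := by rw [hHZ]; trivial
        have hg₂ : g₂ ∈ H ⊔ Z := by rw [hHZ]; trivial
        rw [← SetLike.mem_coe, Subgroup.mul_normal H Z] at hg₁ hg₂
        obtain ⟨h₁, hh₁, z₁, hz₁, rfl⟩ := hg₁
        obtain ⟨h₂, hh₂, z₂, hz₂, rfl⟩ := hg₂
        rw [comm_central_left hz₁, comm_central_right hz₂, commutatorElement_def]
        exact H.mul_mem (H.mul_mem (H.mul_mem hh₁ hh₂) (H.inv_mem hh₁)) (H.inv_mem hh₂)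
      rw [← hH, sup_eq_left.mpr hcle]

/-- The key step: from a finite "generating set mod `γ (n+1)`" of `γ n` we obtain a finite
generating set mod `γ (n+2)` of `γ (n+1)`, by taking commutators with generators of `G`. -/
private lemma lcs_step_fg (G : Type) [Group G] (n : ℕ) (S T : Set G)
    (hSfin : S.Finite) (hTfin : T.Finite)
    (hS : S ⊆ Subgroup.lowerCentralSeries (⊤ : Subgroup G) n)
    (hSgen : Subgroup.closure S ⊔ Subgroup.lowerCentralSeries (⊤ : Subgroup G) (n + 1) = Subgroup.lowerCentralSeries (⊤ : Subgroup G) n)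
    (hT : Subgroup.closure T = ⊤) :
    ∃ S' : Set G, S'.Finite ∧ S' ⊆ Subgroup.lowerCentralSeries (⊤ : Subgroup G) (n + 1) ∧
      Subgroup.closure S' ⊔ Subgroup.lowerCentralSeries (⊤ : Subgroup G) (n + 2) = Subgroup.lowerCentralSeries (⊤ : Subgroup G) (n + 1) := by
  classical
  have hsucc1 : Subgroup.lowerCentralSeries (⊤ : Subgroup G) (n + 1) = ⁅Subgroup.lowerCentralSeries (⊤ : Subgroup G) n, (⊤ : Subgroup G)⁆ := rfl
  have hsucc2 : Subgroup.lowerCentralSeries (⊤ : Subgroup G) (n + 2) = ⁅Subgroup.lowerCentralSeries (⊤ : Subgroup G) (n + 1), (⊤ : Subgroup G)⁆ :=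
    rfl
  refine ⟨(fun p : G × G => ⁅p.1, p.2⁆) '' (S ×ˢ T), (hSfin.prod hTfin).image _, ?_, ?_⟩
  · rintro x ⟨⟨s, t⟩, ⟨hs, _⟩, rfl⟩
    rw [hsucc1]
    exact commutator_mem_commutator (hS hs) (mem_top t)
  set S' : Set G := (fun p : G × G => ⁅p.1, p.2⁆) '' (S ×ˢ T) with hS'
  set L : Subgroup G := Subgroup.closure S' ⊔ Subgroup.lowerCentralSeries (⊤ : Subgroup G) (n + 2) with hL
  -- L is contained in γ (n+1)
  have hLle : L ≤ Subgroup.lowerCentralSeries (⊤ : Subgroup G) (n + 1) := by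
    rw [hL]
    refine sup_le ((Subgroup.closure_le _).mpr ?_) (Subgroup.lowerCentralSeries_antitone _ (by omega))
    rintro x ⟨⟨s, t⟩, ⟨hs, _⟩, rfl⟩
    rw [hsucc1]
    exact commutator_mem_commutator (hS hs) (mem_top t)
  -- L is normal
  haveI hLnormal : L.Normal := by
    constructor
    intro x hx g
    have h1 : ⁅g, x⁆ ∈ L := by
      have : ⁅g, x⁆ ∈ Subgroup.lowerCentralSeries (⊤ : Subgroup G) (n + 2) := by
        rw [hsucc2, Subgroup.commutator_comm]
        exact commutator_mem_commutator (mem_top g) (hLle hx)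
      exact le_sup_right (α := Subgroup G) this
    have h2 : g * x * g⁻¹ = ⁅g, x⁆ * x := by rw [commutatorElement_def]; group
    rw [h2]
    exact L.mul_mem h1 hx
  -- pass to the quotient by L
  set mk := QuotientGroup.mk' L with hmk
  have hmksurj : Surjective mk := QuotientGroup.mk'_surjective L
  -- γ (n+2) of the quotient is trivial
  have hq2 : Subgroup.lowerCentralSeries (⊤ : Subgroup (G ⧸ L)) (n + 2) = ⊥ := by
    rw [← lcs_map_surjective mk hmksurj (n + 2), eq_bot_iff]
    rintro x ⟨y, hy, rfl⟩
    have : y ∈ L := le_sup_right (α := Subgroup G) hy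
    rw [Subgroup.mem_bot, hmk, QuotientGroup.mk'_apply, QuotientGroup.eq_one_iff]
    exact this
  -- hence γ (n+1) of the quotient is central
  have hq1 : Subgroup.lowerCentralSeries (⊤ : Subgroup (G ⧸ L)) (n + 1) ≤ Subgroup.center (G ⧸ L) := by
    apply le_center_of_commutator_eq_bot
    rw [← hq2]; rfl
  -- the images of elements of S are central in the quotient
  have hScentral : ∀ s ∈ S, mk s ∈ Subgroup.center (G ⧸ L) := by
    intro s hs
    rw [Subgroup.mem_center_iff]
    intro g
    obtain ⟨x, rfl⟩ := hmksurj g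
    have hx : x ∈ Subgroup.closure T := by rw [hT]; trivial
    have : Commute (mk s) (mk x) := by
      induction hx using Subgroup.closure_induction with
      | mem t ht =>
          have hst : ⁅s, t⁆ ∈ L := by
            apply le_sup_left (α := Subgroup G)
            exact Subgroup.subset_closure ⟨(s, t), ⟨hs, ht⟩, rfl⟩
          have : mk ⁅s, t⁆ = 1 := (QuotientGroup.eq_one_iff _).mpr hst
          rw [map_commutatorElement] at this
          exact commutatorElement_eq_one_iff_commute.mp this
      | one => exact Commute.one_right _
      | mul a b _ _ ha hb => rw [map_mul]; exact ha.mul_right hb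
      | inv a _ ha => rw [map_inv]; exact ha.inv_right
    exact this.symm
  -- the image of γ n is central in the quotient
  have hgn : (Subgroup.lowerCentralSeries (⊤ : Subgroup G) n).map mk ≤ Subgroup.center (G ⧸ L) := by
    rw [← hSgen, Subgroup.map_sup, MonoidHom.map_closure]
    refine sup_le ((Subgroup.closure_le _).mpr ?_) ?_
    · rintro x ⟨s, hs, rfl⟩
      exact hScentral s hs
    · refine le_trans ?_ hq1
      rw [← lcs_map_surjective mk hmksurj (n + 1)]
  -- hence the image of γ (n+1) is trivial, i.e. γ (n+1) ≤ L
  have hfinal : Subgroup.lowerCentralSeries (⊤ : Subgroup G) (n + 1) ≤ L := by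
    intro x hx
    have h1 : (Subgroup.lowerCentralSeries (⊤ : Subgroup G) (n + 1)).map mk = ⊥ := by
      rw [eq_bot_iff, hsucc1, Subgroup.map_commutator]
      calc ⁅(Subgroup.lowerCentralSeries (⊤ : Subgroup G) n).map mk, (⊤ : Subgroup G).map mk⁆
          ≤ ⁅Subgroup.center (G ⧸ L), (⊤ : Subgroup (G ⧸ L))⁆ :=
            Subgroup.commutator_mono hgn le_top
        _ = ⊥ := commutator_center_top
    have : mk x ∈ (Subgroup.lowerCentralSeries (⊤ : Subgroup G) (n + 1)).map mk := Subgroup.mem_map_of_mem mk hx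
    rw [h1, Subgroup.mem_bot] at this
    exact (QuotientGroup.eq_one_iff x).mp this
  exact le_antisymm hLle hfinal

/-- Every subgroup of a finitely generated commutative group is finitely generated. -/
private lemma subgroup_fg_of_comm_fg {A : Type*} [CommGroup A] [Group.FG A]
    (H : Subgroup A) : H.FG := by
  rw [Subgroup.fg_iff_add_fg]
  haveI : AddGroup.FG (Additive A) := GroupFG.iff_add_fg.mp ‹_›
  haveI : Module.Finite ℤ (Additive A) := Module.Finite.iff_addGroup_fg.mpr ‹_›
  have h := IsNoetherian.noetherian (AddSubgroup.toIntSubmodule H.toAddSubgroup)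
  rw [Submodule.fg_iff_addSubgroup_fg] at h
  rwa [AddSubgroup.toIntSubmodule_toAddSubgroup] at h

/-- If the image of a subgroup under a hom is f.g. and its intersection with the kernel is f.g.,
then the subgroup is f.g. -/
private lemma subgroup_fg_of_map_of_ker {G Q : Type*} [Group G] [Group Q] (f : G →* Q)
    (H : Subgroup G) (h1 : (H.map f).FG) (h2 : (H ⊓ f.ker).FG) : H.FG := by
  classical
  rw [Subgroup.fg_iff] at h1 h2 ⊢
  obtain ⟨P, hP, hPfin⟩ := h1
  obtain ⟨F₂, hF₂, hF₂fin⟩ := h2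
  have hPsub : P ⊆ (H.map f : Set Q) := hP ▸ Subgroup.subset_closure
  have hchoose : ∀ p : P, ∃ x, x ∈ H ∧ f x = (p : Q) := by
    intro p
    obtain ⟨x, hx, hfx⟩ := hPsub p.2
    exact ⟨x, hx, hfx⟩
  choose g hgH hgf using hchoose
  haveI : Finite P := hPfin
  refine ⟨Set.range g ∪ F₂, ?_, (Set.finite_range g).union hF₂fin⟩
  · have hF₂H : F₂ ⊆ (H : Set G) := fun x hx =>
      (le_of_eq hF₂).trans inf_le_left (Subgroup.subset_closure hx)
    have hgrange : Set.range g ⊆ (H : Set G) := by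
      rintro x ⟨p, rfl⟩; exact hgH p
    apply le_antisymm
    · exact (Subgroup.closure_le _).mpr (Set.union_subset hgrange hF₂H)
    · intro h hh
      have himg : f h ∈ Subgroup.closure (f '' Set.range g) := by
        have : f '' Set.range g = P := by
          ext y
          constructor
          · rintro ⟨x, ⟨p, rfl⟩, rfl⟩; rw [hgf p]; exact p.2
          · intro hy; exact ⟨g ⟨y, hy⟩, ⟨⟨y, hy⟩, rfl⟩, hgf ⟨y, hy⟩⟩
        rw [this, hP]
        exact Subgroup.mem_map_of_mem f hh
      rw [← MonoidHom.map_closure] at himg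
      obtain ⟨w, hw, hfw⟩ := himg
      have hwH : w ∈ H := (Subgroup.closure_le H).mpr hgrange hw
      have hker : w⁻¹ * h ∈ f.ker := by
        rw [MonoidHom.mem_ker, map_mul, map_inv, hfw, inv_mul_cancel]
      have hmem : w⁻¹ * h ∈ H ⊓ f.ker :=
        Subgroup.mem_inf.mpr ⟨H.mul_mem (H.inv_mem hwH) hh, hker⟩
      have h1' : w ∈ Subgroup.closure (Set.range g ∪ F₂) :=
        Subgroup.closure_mono Set.subset_union_left hw
      have h2' : w⁻¹ * h ∈ Subgroup.closure (Set.range g ∪ F₂) := by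
        have : w⁻¹ * h ∈ Subgroup.closure F₂ := by rw [hF₂]; exact hmem
        exact Subgroup.closure_mono Set.subset_union_right this
      have := Subgroup.mul_mem _ h1' h2'
      rwa [mul_inv_cancel_left] at this

private lemma subgroup_fg_map {G Q : Type*} [Group G] [Group Q] (f : G →* Q) {P : Subgroup G}
    (h : P.FG) : (P.map f).FG := by
  rw [Subgroup.fg_iff] at h ⊢
  obtain ⟨S, hS, hfin⟩ := h
  exact ⟨f '' S, by rw [← MonoidHom.map_closure, hS], hfin.image f⟩

/-- Each term of the lower central series of a f.g. group is finitely generated modulo the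
next term. -/
private lemma lcs_fg_mod (G : Type) [Group G] [Group.FG G] :
    ∀ n : ℕ, ∃ S : Set G, S.Finite ∧ S ⊆ Subgroup.lowerCentralSeries (⊤ : Subgroup G) n ∧
      Subgroup.closure S ⊔ Subgroup.lowerCentralSeries (⊤ : Subgroup G) (n + 1) = Subgroup.lowerCentralSeries (⊤ : Subgroup G) n := by
  obtain ⟨T, hT, hTfin⟩ := Group.fg_iff.mp ‹_›
  intro n
  induction n with
  | zero =>
      refine ⟨T, hTfin, by simp, ?_⟩
      rw [hT, Subgroup.lowerCentralSeries_zero]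
      exact top_sup_eq _
  | succ n ih =>
      obtain ⟨S, hfin, hsub, hgen⟩ := ih
      exact lcs_step_fg G n S T hfin hTfin hsub hgen hT

/-- Every subgroup of a f.g. nilpotent group is finitely generated. -/
private lemma noeth_of_fg_nilpotent :
    ∀ (c : ℕ) (G : Type) [Group G] [Group.FG G] [Group.IsNilpotent G],
      Group.nilpotencyClass G ≤ c → ∀ H : Subgroup G, H.FG := by
  intro c
  induction c with
  | zero =>
      intro G _ _ _ hc H
      haveI : Subsingleton G := nilpotencyClass_zero_iff_subsingleton.mp (Nat.le_zero.mp hc)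
      refine (Subgroup.fg_iff H).mpr ⟨∅, ?_, Set.finite_empty⟩
      rw [Subgroup.closure_empty]
      ext x
      simp only [Subgroup.mem_bot, Subsingleton.elim x 1]
      simp [H.one_mem]
  | succ c ih =>
      intro G _ _ _ hc H
      have hbot : Subgroup.lowerCentralSeries (⊤ : Subgroup G) (c + 1) = ⊥ :=
        Subgroup.lowerCentralSeries_eq_bot_iff_nilpotencyClass_le.mpr hc
      set K := Subgroup.lowerCentralSeries (⊤ : Subgroup G) c with hK
      have hKcent : K ≤ Subgroup.center G := by
        apply le_center_of_commutator_eq_bot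
        rw [← hbot]; rfl
      -- K is finitely generated
      have hKfg : K.FG := by
        obtain ⟨S, hfin, hsub, hgen⟩ := lcs_fg_mod G c
        rw [hbot, sup_bot_eq] at hgen
        exact (Subgroup.fg_iff K).mpr ⟨S, hgen, hfin⟩
      -- K is a commutative group
      letI : CommGroup ↥K :=
        { (inferInstance : Group ↥K) with
          mul_comm := fun a b =>
            Subtype.ext ((Subgroup.mem_center_iff.mp (hKcent a.2) (b : G)).symm) }
      haveI : Group.FG ↥K := (Group.fg_iff_subgroup_fg K).mpr hKfg
      -- the quotient by K
      set mk := QuotientGroup.mk' K with hmk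
      have hmksurj : Surjective mk := QuotientGroup.mk'_surjective K
      haveI : Group.FG (G ⧸ K) := Group.fg_of_surjective hmksurj
      haveI : Group.IsNilpotent (G ⧸ K) := nilpotent_of_surjective mk hmksurj
      have hclass : Group.nilpotencyClass (G ⧸ K) ≤ c := by
        apply Subgroup.lowerCentralSeries_eq_bot_iff_nilpotencyClass_le.mp
        rw [← lcs_map_surjective mk hmksurj c, ← hK]
        rw [Subgroup.map_eq_bot_iff]
        rw [QuotientGroup.ker_mk']
      -- intersection with K is f.g.
      have hinterfg : (H ⊓ K).FG := by
        have hX : ((H ⊓ K).subgroupOf K).FG := subgroup_fg_of_comm_fg _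
        have := subgroup_fg_map K.subtype hX
        rwa [Subgroup.subgroupOf_map_subtype, inf_of_le_left inf_le_right] at this
      -- image is f.g.
      have hmapfg : (H.map mk).FG := ih (G ⧸ K) hclass (H.map mk)
      apply subgroup_fg_of_map_of_ker mk H hmapfg
      rwa [QuotientGroup.ker_mk']

/-- Finitely generated nilpotent groups are Hopfian. -/
private lemma hopfian_of_fg_nilpotent (G : Type) [Group G] [Group.FG G] [Group.IsNilpotent G]
    (ψ : G →* G) (hs : Surjective ψ) : Injective ψ := by
  classical
  let p : ℕ → G →* G := fun n => Nat.rec (MonoidHom.id G) (fun _ q => ψ.comp q) n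
  have hpsucc : ∀ n, p (n + 1) = ψ.comp (p n) := fun n => rfl
  have hpsurj : ∀ n, Surjective (p n) := by
    intro n
    induction n with
    | zero => exact surjective_id
    | succ n ih => exact hs.comp ih
  set K : ℕ → Subgroup G := fun n => (p n).ker with hKdef
  have hmono : Monotone K := by
    apply monotone_nat_of_le_succ
    intro n x hx
    show (p (n + 1)) x = 1
    rw [hpsucc, MonoidHom.comp_apply, show (p n) x = 1 from hx, map_one]
  have hU : (⨆ n, K n).FG :=
    noeth_of_fg_nilpotent (Group.nilpotencyClass G) G le_rfl _
  obtain ⟨F, hF, hFfin⟩ := (Subgroup.fg_iff _).mp hU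
  have hex : ∀ x : F, ∃ n, (x : G) ∈ K n := by
    intro x
    have hx : (x : G) ∈ ⨆ n, K n := hF ▸ Subgroup.subset_closure x.2
    exact (Subgroup.mem_iSup_of_directed hmono.directed_le).mp hx
  choose nf hnf using hex
  haveI : Finite F := hFfin
  haveI : Fintype F := Fintype.ofFinite _
  set m := Finset.univ.sup nf with hm
  have hUle : (⨆ n, K n) ≤ K m := by
    rw [← hF]
    apply (Subgroup.closure_le _).mpr
    intro x hx
    exact hmono (Finset.le_sup (Finset.mem_univ (⟨x, hx⟩ : F))) (hnf ⟨x, hx⟩)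
  rw [← MonoidHom.ker_eq_bot_iff]
  rw [eq_bot_iff]
  intro x hx
  obtain ⟨y, hy⟩ := hpsurj m x
  have hy1 : y ∈ K (m + 1) := by
    show (p (m + 1)) y = 1
    rw [hpsucc, MonoidHom.comp_apply, hy]
    exact hx
  have hym : y ∈ K m := hUle (le_iSup K (m + 1) hy1)
  have : x = 1 := by rw [← hy]; exact hym
  rw [this]
  exact Subgroup.one_mem _

/-- Let `N` be a finitely generated nilpotent group and `ψ : N → N` an
endomorphism.  Then `ψ` is an automorphism (bijective) if and only if the induced endomorphism
`ψ_*` of the abelianization `N^{ab} = N/[N,N]` is an automorphism. -/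
theorem stmt_18 (N : Type) [Group N] [Group.FG N] [Group.IsNilpotent N] (ψ : N →* N) :
    Function.Bijective ψ ↔ Function.Bijective (Abelianization.map ψ) := by
  constructor
  · intro h
    let e := MulEquiv.ofBijective ψ h
    have hfun : ⇑(Abelianization.map ψ) = ⇑e.abelianizationCongr := by
      funext a
      refine QuotientGroup.induction_on a ?_
      intro x
      show Abelianization.map ψ (Abelianization.of x) = e.abelianizationCongr (Abelianization.of x)
      rw [Abelianization.map_of, abelianizationCongr_of]
      rfl
    rw [hfun]
    exact e.abelianizationCongr.bijective
  · intro h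
    have hsurj : Surjective ψ := by
      have hrange : ψ.range ⊔ commutator N = ⊤ := by
        rw [eq_top_iff]
        intro g _
        obtain ⟨a, ha⟩ := h.2 (Abelianization.of g)
        obtain ⟨x, rfl⟩ : ∃ x, Abelianization.of x = a :=
          QuotientGroup.induction_on a fun x => ⟨x, rfl⟩
        rw [Abelianization.map_of] at ha
        have hmem : (ψ x)⁻¹ * g ∈ commutator N := by
          have h2 : ((ψ x : N) : N ⧸ commutator N) = ((g : N) : N ⧸ commutator N) := ha
          exact QuotientGroup.eq.mp h2
        have hgeq : ψ x * ((ψ x)⁻¹ * g) = g := by group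
        rw [← hgeq]
        exact Subgroup.mul_mem _
          ((le_sup_left : ψ.range ≤ ψ.range ⊔ commutator N) ⟨x, rfl⟩)
          ((le_sup_right : commutator N ≤ ψ.range ⊔ commutator N) hmem)
      have := eq_top_of_sup_commutator (Group.nilpotencyClass N) N le_rfl ψ.range hrange
      exact MonoidHom.range_eq_top.mp this
    exact ⟨hopfian_of_fg_nilpotent N ψ hsurj, hsurj⟩
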